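/- For fixed β ∈ [0,1], the function α ↦ f_A(α,β) is monotonically decreasing: if 0 ≤ α₁ ≤ α₂, α₂ < 1, and α₂ ≤ min{2β, 2(1−β)}, then f_A(α₂,β) ≤ f_A(α₁,β). -/

import Mathlib

/-- Binary entropy function (base-2 logs), with the convention `0 * log 0 = 0`. -/
noncomputable def binEnt (x : ℝ) : ℝ :=
  -(x * Real.logb 2 x) - (1 - x) * Real.logb 2 (1 - x)

/-- The spectral shape exponent of the accumulator:
`f_A(α,β) = α − h(β) + (1−α)·h((β−α/2)/(1−α))`. -/
noncomputable def fA (α β : ℝ) : ℝ :=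
  α - binEnt β + (1 - α) * binEnt ((β - α / 2) / (1 - α))

/-- The spectral shape exponent of the discrete derivative:
`f_D(α,β) = (1−α)·h(β/(2(1−α))) + α·h(β/(2α)) − h(α)`. -/
noncomputable def fD (α β : ℝ) : ℝ :=
  (1 - α) * binEnt (β / (2 * (1 - α))) + α * binEnt (β / (2 * α)) - binEnt α

/-- Auxiliary closed form of `fA`. -/
noncomputable def gAux (β α : ℝ) : ℝ :=
  α + (Real.negMulLog (β - α / 2) + Real.negMulLog (1 - β - α / 2)
      - Real.negMulLog (1 - α)) / Real.log 2

lemma mul_log_div (w d : ℝ) (hw : 0 ≤ w) (hd : 0 < d) :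
    w * Real.log (w / d) = w * Real.log w - w * Real.log d := by
  rcases eq_or_lt_of_le hw with h | h
  · simp [← h]
  · rw [Real.log_div h.ne' hd.ne']; ring

lemma fA_eq_gAux (β α : ℝ) (hu : 0 ≤ β - α / 2) (hv : 0 ≤ 1 - β - α / 2) (hα : α < 1) :
    fA α β = gAux β α - binEnt β := by
  have hd : (0 : ℝ) < 1 - α := by linarith
  have hl2 : Real.log 2 ≠ 0 := (Real.log_pos one_lt_two).ne'
  set u := β - α / 2 with hu_def
  set v := 1 - β - α / 2 with hv_def
  set d := 1 - α with hd_def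
  have huv : u + v = d := by simp [hu_def, hv_def, hd_def]; ring
  have h1 : (1 : ℝ) - u / d = v / d := by
    field_simp
    linarith
  have key : d * binEnt (u / d) =
      (Real.negMulLog u + Real.negMulLog v - Real.negMulLog d) / Real.log 2 := by
    rw [binEnt, h1, Real.logb, Real.logb]
    have e1 := mul_log_div u d hu hd
    have e2 := mul_log_div v d hv hd
    have expand : d * (-(u / d * (Real.log (u / d) / Real.log 2))
        - v / d * (Real.log (v / d) / Real.log 2))
        = (-(u * Real.log (u / d)) - v * Real.log (v / d)) / Real.log 2 := by
      field_simp
    rw [expand]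
    congr 1
    rw [e1, e2, Real.negMulLog, Real.negMulLog, Real.negMulLog, ← huv]
    ring
  rw [fA, gAux]
  rw [key]
  ring

lemma gAux_hasDerivAt (β α : ℝ) (hu : 0 < β - α / 2) (hv : 0 < 1 - β - α / 2) (hα : α < 1) :
    HasDerivAt (gAux β)
      (1 + ((Real.log (β - α / 2) + Real.log (1 - β - α / 2)) / 2
        - Real.log (1 - α)) / Real.log 2) α := by
  have hd : (0 : ℝ) < 1 - α := by linarith
  have h1 : HasDerivAt (fun x : ℝ => β - x / 2) (-(1 / 2)) α := by
    simpa using ((hasDerivAt_id α).div_const 2).const_sub β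
  have h2 : HasDerivAt (fun x : ℝ => 1 - β - x / 2) (-(1 / 2)) α := by
    simpa using ((hasDerivAt_id α).div_const 2).const_sub (1 - β)
  have h3 : HasDerivAt (fun x : ℝ => 1 - x) (-1) α := by
    simpa using (hasDerivAt_id α).const_sub 1
  have d1 := (Real.hasDerivAt_negMulLog hu.ne').comp α h1
  have d2 := (Real.hasDerivAt_negMulLog hv.ne').comp α h2
  have d3 := (Real.hasDerivAt_negMulLog hd.ne').comp α h3
  have := ((hasDerivAt_id α).add (((d1.add d2).sub d3).div_const (Real.log 2)))
  refine this.congr_deriv ?_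
  field_simp
  ring

theorem fA_antitone_left (β : ℝ) (hβ0 : 0 ≤ β) (hβ1 : β ≤ 1)
    (α₁ α₂ : ℝ) (h1 : 0 ≤ α₁) (h12 : α₁ ≤ α₂) (h2 : α₂ < 1)
    (hdom : α₂ ≤ min (2 * β) (2 * (1 - β))) :
    fA α₂ β ≤ fA α₁ β := by
  have hb1 : α₂ ≤ 2 * β := le_trans hdom (min_le_left _ _)
  have hb2 : α₂ ≤ 2 * (1 - β) := le_trans hdom (min_le_right _ _)
  have hl2 : (0 : ℝ) < Real.log 2 := Real.log_pos one_lt_two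
  -- continuity of gAux
  have hcont : Continuous (gAux β) := by
    apply continuous_id.add
    apply Continuous.div_const
    apply Continuous.sub
    · exact (Real.continuous_negMulLog.comp (by continuity)).add
        (Real.continuous_negMulLog.comp (by continuity))
    · exact Real.continuous_negMulLog.comp (by continuity)
  -- derivative nonpositive on the interior
  have hanti : AntitoneOn (gAux β) (Set.Icc 0 α₂) := by
    apply antitoneOn_of_deriv_nonpos (convex_Icc 0 α₂) hcont.continuousOn
    · intro x hx
      rw [interior_Icc] at hx
      exact ((gAux_hasDerivAt β x (by linarith [hx.2]) (by linarith [hx.2])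
        (by linarith [hx.2])).differentiableAt).differentiableWithinAt
    · intro x hx
      rw [interior_Icc] at hx
      have hu : 0 < β - x / 2 := by linarith [hx.2]
      have hv : 0 < 1 - β - x / 2 := by linarith [hx.2]
      have hd : (0 : ℝ) < 1 - x := by linarith [hx.2]
      rw [(gAux_hasDerivAt β x hu hv (by linarith [hx.2])).deriv]
      have hAMGM : (β - x / 2) * (1 - β - x / 2) ≤ ((1 - x) / 2) ^ 2 := by
        nlinarith [sq_nonneg (2 * β - 1)]
      have hlog : Real.log (β - x / 2) + Real.log (1 - β - x / 2)
          ≤ 2 * (Real.log (1 - x) - Real.log 2) := by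
        have h := Real.log_le_log (by positivity) hAMGM
        rw [Real.log_mul hu.ne' hv.ne',
          show ((1 - x) / 2) ^ 2 = ((1 - x) / 2) * ((1 - x) / 2) by ring,
          Real.log_mul (by positivity : ((1:ℝ) - x) / 2 ≠ 0) (by positivity),
          Real.log_div hd.ne' (by norm_num : (2:ℝ) ≠ 0)] at h
        linarith
      have : (Real.log (β - x / 2) + Real.log (1 - β - x / 2)) / 2
          - Real.log (1 - x) ≤ -Real.log 2 := by linarith
      have h' : ((Real.log (β - x / 2) + Real.log (1 - β - x / 2)) / 2
          - Real.log (1 - x)) / Real.log 2 ≤ -1 := by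
        rw [div_le_iff₀ hl2]
        linarith
      linarith
  have hg := hanti (Set.mem_Icc.mpr ⟨h1, h12⟩) (Set.mem_Icc.mpr ⟨le_trans h1 h12, le_refl _⟩) h12
  rw [fA_eq_gAux β α₁ (by linarith) (by linarith) (by linarith),
    fA_eq_gAux β α₂ (by linarith) (by linarith) h2]
  linarith
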